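/- A complex submanifold S of codimension m in an n-dimensional complex manifold M splits into M (i.e. the exact sequence O → TS → TM|_S → N_S → O of vector bundles splits) if and only if there is an atlas {(Û_α, ẑ_α)} of M adapted to S such that ∂ẑ^p_β/∂ẑ^r_α vanishes identically on S for all r = 1,…,m, p = m+1,…,n, and all pairs of indices α, β. -/

import Mathlib

open Filter Topology

abbrev Esp (n : ℕ) := Fin n → ℂ

/-- The model of the codimension-`m` submanifold in a chart: `{z¹ = ⋯ = z^m = 0}`. -/
def sliceSet (n m : ℕ) : Set (Esp n) := {x | ∀ r : Fin n, (r : ℕ) < m → x r = 0}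

/-- The transition from the chart `e` to the chart `e'` is holomorphic. -/
def IsHoloCompat {n : ℕ} {M : Type*} [TopologicalSpace M]
    (e e' : OpenPartialHomeomorph M (Esp n)) : Prop :=
  AnalyticOnNhd ℂ (↑e' ∘ e.symm) (e.target ∩ e.symm ⁻¹' e'.source)

/-- A chart of `M` adapted to `S`: holomorphically compatible with the complex
structure, and mapping `S` to the model slice `{z¹ = ⋯ = z^m = 0}`. -/
def IsAdaptedChart (n m : ℕ) {M : Type*} [TopologicalSpace M]
    [ChartedSpace (Esp n) M] (S : Set M) (e : OpenPartialHomeomorph M (Esp n)) : Prop :=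
  (∀ c ∈ atlas (Esp n) M, IsHoloCompat e c ∧ IsHoloCompat c e) ∧
  e.source ∩ S = e.source ∩ ↑e ⁻¹' sliceSet n m

/-- An atlas of `M` adapted to `S`. -/
def IsAdaptedAtlas (n m : ℕ) {M : Type*} [TopologicalSpace M]
    [ChartedSpace (Esp n) M] (S : Set M)
    (A : Set (OpenPartialHomeomorph M (Esp n))) : Prop :=
  (∀ e ∈ A, IsAdaptedChart n m S e) ∧ (∀ x : M, ∃ e ∈ A, x ∈ e.source) ∧
  (∀ e ∈ A, ∀ e' ∈ A, IsHoloCompat e e')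

/-- `S` splits into `M`: the extension `O → TS → TM|_S → N_S → O` splits, i.e. there is
a holomorphic bundle morphism `σ : N_S → TM|_S` with `π ∘ σ = id`.  In the local frames
provided by an adapted atlas, `σ` is a family of linear maps `σ_e(z) : ℂⁿ → ℂⁿ`
depending only on the normal components of the argument (so defined on `N_S`), which is
a right inverse of the projection to the normal components (`π ∘ σ = id`), holomorphic
along `S`, and compatible with the Jacobians of the transition maps. -/
def SplitsInto (n m : ℕ) {M : Type*} [TopologicalSpace M]
    [ChartedSpace (Esp n) M] (S : Set M) : Prop :=
  ∃ A : Set (OpenPartialHomeomorph M (Esp n)), IsAdaptedAtlas n m S A ∧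
    ∃ σ : OpenPartialHomeomorph M (Esp n) → Esp n → (Esp n →ₗ[ℂ] Esp n),
      (∀ e ∈ A, ∀ z : Esp n, ∀ v w : Esp n,
        (∀ r : Fin n, (r : ℕ) < m → v r = w r) → σ e z v = σ e z w) ∧
      (∀ e ∈ A, ∀ z ∈ e.target ∩ sliceSet n m, ∀ v : Esp n,
        ∀ r : Fin n, (r : ℕ) < m → σ e z v r = v r) ∧
      (∀ e ∈ A, ∀ v : Esp n, ∃ F : Esp n → Esp n,
        AnalyticOnNhd ℂ F e.target ∧ ∀ z ∈ e.target ∩ sliceSet n m, F z = σ e z v) ∧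
      (∀ e ∈ A, ∀ e' ∈ A, ∀ z ∈ e.target ∩ sliceSet n m, e.symm z ∈ e'.source →
        ∀ v : Esp n,
          σ e' (e' (e.symm z)) ((fderiv ℂ (↑e' ∘ e.symm) z) v) =
            (fderiv ℂ (↑e' ∘ e.symm) z) (σ e z v))

/-! ### Auxiliary material for the proof -/

open Set

section Aux

lemma isClosed_sliceSet (n m : ℕ) : IsClosed (sliceSet n m) := by
  have h : sliceSet n m = ⋂ (r : Fin n), {x : Esp n | (r : ℕ) < m → x r = 0} := by
    ext x; simp [sliceSet, Set.mem_iInter]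
  rw [h]
  refine isClosed_iInter fun r => ?_
  by_cases h : (r : ℕ) < m
  · have h2 : {x : Esp n | (r : ℕ) < m → x r = 0} = (fun x : Esp n => x r) ⁻¹' {0} := by
      ext x; simp [h]
    rw [h2]
    exact isClosed_singleton.preimage (continuous_apply r)
  · have h2 : {x : Esp n | (r : ℕ) < m → x r = 0} = Set.univ := by
      ext x; simp [h]
    rw [h2]; exact isClosed_univ

noncomputable def nproj (n m : ℕ) : Esp n →ₗ[ℂ] Esp n :=
  LinearMap.pi (fun j : Fin n => if (j : ℕ) < m then LinearMap.proj j else 0)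

lemma nproj_apply (n m : ℕ) (u : Esp n) (j : Fin n) :
    nproj n m u j = if (j : ℕ) < m then u j else 0 := by
  by_cases h : (j : ℕ) < m <;> simp [nproj, LinearMap.pi_apply, h]

lemma sum_single_apply (n m : ℕ) (u : Esp n) (j : Fin n) :
    (∑ s ∈ Finset.univ.filter (fun s : Fin n => (s : ℕ) < m), u s • (Pi.single s 1 : Esp n)) j
      = if (j : ℕ) < m then u j else 0 := by
  rw [Finset.sum_apply]
  have h : ∀ s ∈ Finset.univ.filter (fun s : Fin n => (s : ℕ) < m),
      (u s • (Pi.single s 1 : Esp n)) j = if s = j then u s else 0 := by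
    intro s _
    by_cases h : s = j <;> simp [Pi.single_apply, h]
  rw [Finset.sum_congr rfl h, Finset.sum_ite_eq']
  by_cases h : (j : ℕ) < m <;> simp [h]

lemma nproj_eq_sum (n m : ℕ) (u : Esp n) :
    nproj n m u
      = ∑ s ∈ Finset.univ.filter (fun s : Fin n => (s : ℕ) < m),
          u s • (Pi.single s 1 : Esp n) := by
  funext j
  rw [nproj_apply, sum_single_apply]

noncomputable def tproj (n m : ℕ) : Esp n →L[ℂ] Esp n :=
  LinearMap.toContinuousLinearMap
    (LinearMap.pi (fun j : Fin n => if m ≤ (j : ℕ) then LinearMap.proj j else 0))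

lemma tproj_apply (n m : ℕ) (u : Esp n) (j : Fin n) :
    tproj n m u j = if m ≤ (j : ℕ) then u j else 0 := by
  by_cases h : m ≤ (j : ℕ) <;> simp [tproj, LinearMap.pi_apply, h]

noncomputable def nilEquiv {n : ℕ} (A : Esp n →L[ℂ] Esp n) (hA : ∀ v, A (A v) = 0) :
    Esp n ≃L[ℂ] Esp n where
  toLinearEquiv := LinearEquiv.ofLinear
    ((ContinuousLinearMap.id ℂ (Esp n) - A) : Esp n →L[ℂ] Esp n).toLinearMap
    ((ContinuousLinearMap.id ℂ (Esp n) + A) : Esp n →L[ℂ] Esp n).toLinearMap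
    (by
      apply LinearMap.ext; intro v
      have h : A (A v) = 0 := hA v
      simp [h])
    (by
      apply LinearMap.ext; intro v
      have h : A (A v) = 0 := hA v
      simp [h])
  continuous_toFun := (ContinuousLinearMap.id ℂ (Esp n) - A).continuous
  continuous_invFun := (ContinuousLinearMap.id ℂ (Esp n) + A).continuous

lemma nilEquiv_coe {n : ℕ} (A : Esp n →L[ℂ] Esp n) (hA : ∀ v, A (A v) = 0) :
    ((nilEquiv A hA : Esp n →L[ℂ] Esp n) : Esp n →L[ℂ] Esp n)
      = ContinuousLinearMap.id ℂ (Esp n) - A := by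
  ext v; rfl

lemma nilEquiv_symm_apply {n : ℕ} (A : Esp n →L[ℂ] Esp n) (hA : ∀ v, A (A v) = 0) (v : Esp n) :
    (nilEquiv A hA).symm v = v + A v := rfl

/-- Derivative of an analytic map in a direction tangent to the slice, of a normal component,
vanishes if the map preserves the slice. -/
lemma tangent_deriv_zero {n m : ℕ} {g : Esp n → Esp n} {U : Set (Esp n)} (hU : IsOpen U)
    {z : Esp n} (hz : z ∈ U) (hzs : z ∈ sliceSet n m)
    (hg : AnalyticAt ℂ g z)
    (hslice : ∀ y ∈ U ∩ sliceSet n m, g y ∈ sliceSet n m)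
    {t : Esp n} (ht : ∀ r : Fin n, (r : ℕ) < m → t r = 0)
    {s : Fin n} (hs : (s : ℕ) < m) :
    fderiv ℂ g z t s = 0 := by
  have hline : HasDerivAt (fun c : ℂ => z + c • t) t 0 := by
    simpa using ((hasDerivAt_id (0:ℂ)).smul_const t).const_add z
  have hg' : HasFDerivAt g (fderiv ℂ g z) z := hg.differentiableAt.hasFDerivAt
  have hg'' : HasFDerivAt g (fderiv ℂ g z) (z + (0:ℂ) • t) := by simpa using hg'
  have hcomp : HasDerivAt (fun c : ℂ => g (z + c • t)) (fderiv ℂ g z t) 0 :=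
    hg''.comp_hasDerivAt 0 hline
  have happly : HasDerivAt (fun c : ℂ => g (z + c • t) s) ((fderiv ℂ g z t) s) 0 := by
    have h := (ContinuousLinearMap.proj (R := ℂ)
      (φ := fun _ : Fin n => ℂ) s).hasFDerivAt.comp_hasDerivAt 0 hcomp
    exact h
  have hev : (fun c : ℂ => g (z + c • t) s) =ᶠ[nhds (0:ℂ)] fun _ => 0 := by
    have htend : Filter.Tendsto (fun c : ℂ => z + c • t) (nhds 0) (nhds z) := by
      have hcont : Continuous (fun c : ℂ => z + c • t) := by continuity
      simpa using hcont.tendsto 0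
    filter_upwards [htend.eventually (hU.mem_nhds hz)] with c hc
    have hmem : z + c • t ∈ sliceSet n m := by
      intro r hr
      simp [Pi.add_apply, hzs r hr, ht r hr]
    exact hslice _ ⟨hc, hmem⟩ s hs
  have h0 : deriv (fun c : ℂ => g (z + c • t) s) 0 = 0 := by
    rw [hev.deriv_eq]; simp
  rw [← happly.deriv]; exact h0

/-- Transition maps between adapted charts send the slice into the slice. -/
lemma transition_maps_slice {n m : ℕ} {M : Type*} [TopologicalSpace M]
    {S : Set M} {e e' : OpenPartialHomeomorph M (Esp n)}
    (he : e.source ∩ S = e.source ∩ ↑e ⁻¹' sliceSet n m)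
    (he' : e'.source ∩ S = e'.source ∩ ↑e' ⁻¹' sliceSet n m)
    {y : Esp n} (hy : y ∈ (e.target ∩ ⇑e.symm ⁻¹' e'.source) ∩ sliceSet n m) :
    (⇑e' ∘ ⇑e.symm) y ∈ sliceSet n m := by
  obtain ⟨⟨hyt, hys⟩, hysl⟩ := hy
  have hx : e.symm y ∈ e.source := e.map_target hyt
  have hxS : e.symm y ∈ S := by
    have h : e.symm y ∈ e.source ∩ ↑e ⁻¹' sliceSet n m := by
      refine ⟨hx, ?_⟩
      rw [Set.mem_preimage, e.right_inv hyt]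
      exact hysl
    rw [← he] at h
    exact h.2
  have h : e.symm y ∈ e'.source ∩ S := ⟨hys, hxS⟩
  rw [he'] at h
  exact h.2

/-- The first half of the proposition: an adapted atlas whose transition maps have
block-triangular Jacobian along `S` gives a splitting. -/
lemma reverse_split {n m : ℕ} {M : Type*} [TopologicalSpace M]
    [ChartedSpace (Esp n) M] {S : Set M}
    {A : Set (OpenPartialHomeomorph M (Esp n))} (hA : IsAdaptedAtlas n m S A)
    (hvan : ∀ e ∈ A, ∀ e' ∈ A, ∀ z ∈ e.target ∩ sliceSet n m, e.symm z ∈ e'.source →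
      ∀ r p : Fin n, (r : ℕ) < m → m ≤ (p : ℕ) →
        (fderiv ℂ (↑e' ∘ e.symm) z (Pi.single r 1)) p = 0) :
    SplitsInto n m S := by
  classical
  refine ⟨A, hA, fun _ _ => nproj n m, ?_, ?_, ?_, ?_⟩
  · intro e _ z v w hvw
    funext j
    rw [nproj_apply, nproj_apply]
    by_cases h : (j : ℕ) < m
    · simp [h, hvw j h]
    · simp [h]
  · intro e _ z _ v r hr
    rw [nproj_apply]
    simp [hr]
  · intro e _ v
    exact ⟨fun _ => nproj n m v, analyticOnNhd_const, fun _ _ => rfl⟩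
  · rintro e heA e' he'A z ⟨hzt, hzsl⟩ hze' v
    set g : Esp n → Esp n := ↑e' ∘ ⇑e.symm with hg
    have hU : IsOpen (e.target ∩ ⇑e.symm ⁻¹' e'.source) :=
      e.symm.continuousOn.isOpen_inter_preimage e.open_target e'.open_source
    have hzU : z ∈ e.target ∩ ⇑e.symm ⁻¹' e'.source := ⟨hzt, hze'⟩
    have hgan : AnalyticAt ℂ g z := hA.2.2 e heA e' he'A z hzU
    have hslice := fun y hy =>
      transition_maps_slice (hA.1 e heA).2 (hA.1 e' he'A).2 (y := y) hy
    funext j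
    by_cases hj : (j : ℕ) < m
    · rw [nproj_apply]
      simp only [hj, if_pos]
      have ht : ∀ r : Fin n, (r : ℕ) < m → (v - nproj n m v) r = 0 := by
        intro r hr
        simp [nproj_apply, hr]
      have h0 : fderiv ℂ g z (v - nproj n m v) j = 0 :=
        tangent_deriv_zero hU hzU hzsl hgan hslice ht hj
      have hsub := (fderiv ℂ g z).map_sub v (nproj n m v)
      have h2 : fderiv ℂ g z v j - fderiv ℂ g z (nproj n m v) j = 0 := by
        calc fderiv ℂ g z v j - fderiv ℂ g z (nproj n m v) j
            = (fderiv ℂ g z v - fderiv ℂ g z (nproj n m v)) j := rfl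
          _ = fderiv ℂ g z (v - nproj n m v) j := by rw [← hsub]
          _ = 0 := h0
      exact sub_eq_zero.mp h2
    · rw [nproj_apply]
      simp only [hj, if_neg, not_false_iff]
      rw [nproj_eq_sum, map_sum]
      rw [Finset.sum_apply]
      symm
      refine Finset.sum_eq_zero fun s hs => ?_
      have hsm : (s : ℕ) < m := by simpa using hs
      rw [map_smul]
      have hv := hvan e heA e' he'A z ⟨hzt, hzsl⟩ hze' s j hsm (Nat.le_of_not_lt hj)
      simp only [Pi.smul_apply]
      rw [hv]
      simp

end Aux

section Construction

open scoped ContDiff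

/-- Construction of a slice-preserving correction map `Φ` from local holomorphic
extensions of the splitting morphism. -/
theorem phi_exists {n m : ℕ} (U : Set (Esp n)) (hU : IsOpen U)
    (τ : Esp n → (Esp n →ₗ[ℂ] Esp n))
    (hτ : ∀ z ∈ U ∩ sliceSet n m, ∀ v : Esp n, ∀ r : Fin n, (r : ℕ) < m → τ z v r = v r)
    (hF : ∀ r : Fin n, (r : ℕ) < m → ∃ F : Esp n → Esp n,
      AnalyticOnNhd ℂ F U ∧ ∀ z ∈ U ∩ sliceSet n m, F z = τ z (Pi.single r 1)) :
    ∃ (Φ : Esp n → Esp n) (D : Esp n → (Esp n ≃L[ℂ] Esp n)),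
      AnalyticOnNhd ℂ Φ U ∧
      (∀ z : Esp n, ∀ r : Fin n, (r : ℕ) < m → Φ z r = z r) ∧
      (∀ z ∈ sliceSet n m, Φ z = z) ∧
      (∀ w ∈ U ∩ sliceSet n m, HasFDerivAt Φ ((D w : Esp n →L[ℂ] Esp n)) w) ∧
      (∀ w ∈ U ∩ sliceSet n m, ∀ r : Fin n, (r : ℕ) < m →
        (D w).symm (Pi.single r 1) = τ w (Pi.single r 1)) := by
  classical
  choose F hFa hFv using fun (r : Fin n) (hr : (r : ℕ) < m) => hF r hr
  set I : Finset (Fin n) := Finset.univ.filter (fun r : Fin n => (r : ℕ) < m) with hI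
  have memI : ∀ r : Fin n, r ∈ I ↔ (r : ℕ) < m := by intro r; simp [hI]
  set G : Fin n → Esp n → Esp n := fun r z =>
    if h : (r : ℕ) < m then F r h z else 0 with hG
  have hGa : ∀ r ∈ I, AnalyticOnNhd ℂ (G r) U := by
    intro r hr
    have h := (memI r).1 hr
    simpa [hG, h] using hFa r h
  have hGv : ∀ r ∈ I, ∀ z ∈ U ∩ sliceSet n m, G r z = τ z (Pi.single r 1) := by
    intro r hr z hz
    have h := (memI r).1 hr
    simpa [hG, h] using hFv r h z hz
  set Φ : Esp n → Esp n := fun z => z - ∑ r ∈ I, z r • tproj n m (G r z) with hΦ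
  set A : Esp n → (Esp n →L[ℂ] Esp n) := fun w =>
    ∑ r ∈ I, (ContinuousLinearMap.proj (R := ℂ) (φ := fun _ : Fin n => ℂ) r).smulRight
      (tproj n m (G r w)) with hA
  have hAapp : ∀ w v, A w v = ∑ r ∈ I, v r • tproj n m (G r w) := by
    intro w v
    simp [hA, ContinuousLinearMap.sum_apply]
  have hAcomp : ∀ (w : Esp n) (j : Fin n), (j : ℕ) < m → ∀ v, A w v j = 0 := by
    intro w j hj v
    rw [hAapp]
    rw [Finset.sum_apply]
    refine Finset.sum_eq_zero fun r _ => ?_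
    simp [tproj_apply, Nat.not_le.mpr hj]
  have hAnil : ∀ w v, A w (A w v) = 0 := by
    intro w v
    rw [hAapp]
    refine Finset.sum_eq_zero fun r hr => ?_
    rw [hAcomp w r ((memI r).1 hr)]
    simp
  refine ⟨Φ, fun w => nilEquiv (A w) (hAnil w), ?_, ?_, ?_, ?_, ?_⟩
  · intro z hz
    have hsum : AnalyticAt ℂ (fun z => ∑ r ∈ I, z r • tproj n m (G r z)) z := by
      apply Finset.analyticAt_fun_sum
      intro r hr
      have h1 : AnalyticAt ℂ (fun z : Esp n => z r) z :=
        (ContinuousLinearMap.proj (R := ℂ) (φ := fun _ : Fin n => ℂ) r).analyticAt z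
      have h2 : AnalyticAt ℂ (fun z : Esp n => tproj n m (G r z)) z :=
        ((tproj n m).analyticAt _).comp (hGa r hr z hz)
      exact h1.smul h2
    exact (analyticAt_id).sub hsum
  · intro z r hr
    have h : (∑ i ∈ I, z i • tproj n m (G i z)) r = 0 := by
      rw [Finset.sum_apply]
      refine Finset.sum_eq_zero fun i _ => ?_
      simp [tproj_apply, Nat.not_le.mpr hr]
    simp [hΦ, h]
  · intro z hz
    have h : (∑ i ∈ I, z i • tproj n m (G i z)) = 0 := by
      refine Finset.sum_eq_zero fun i hi => ?_
      rw [hz i ((memI i).1 hi)]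
      simp
    simp [hΦ, h]
  · intro w hw
    have hC : HasFDerivAt (fun z => ∑ r ∈ I, z r • tproj n m (G r z)) (A w) w := by
      rw [hA]
      apply HasFDerivAt.fun_sum
      intro r hr
      have h1 : HasFDerivAt (fun z : Esp n => z r)
          (ContinuousLinearMap.proj (R := ℂ) (φ := fun _ : Fin n => ℂ) r) w := by
        exact (ContinuousLinearMap.proj (R := ℂ)
          (φ := fun _ : Fin n => ℂ) r).hasFDerivAt (x := w)
      have h2 : HasFDerivAt (fun z : Esp n => tproj n m (G r z))
          ((tproj n m).comp (fderiv ℂ (G r) w)) w := by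
        have hd : HasFDerivAt (G r) (fderiv ℂ (G r) w) w :=
          ((hGa r hr) w hw.1).differentiableAt.hasFDerivAt
        exact ((tproj n m).hasFDerivAt).comp w hd
      have h3 := h1.smul h2
      have hw0 : w r = 0 := hw.2 r ((memI r).1 hr)
      simpa [hw0] using h3
    have h4 := (hasFDerivAt_id w).sub hC
    rwa [nilEquiv_coe]
  · intro w hw r hr
    rw [nilEquiv_symm_apply, hAapp]
    have hsum : (∑ i ∈ I, (Pi.single r 1 : Esp n) i • tproj n m (G i w))
        = tproj n m (G r w) := by
      have h : ∀ i ∈ I, (Pi.single r 1 : Esp n) i • tproj n m (G i w)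
          = if i = r then tproj n m (G i w) else 0 := by
        intro i _
        by_cases h : i = r <;> simp [Pi.single_apply, h]
      rw [Finset.sum_congr rfl h, Finset.sum_ite_eq' I r (fun i => tproj n m (G i w))]
      simp [(memI r).2 hr]
    rw [hsum, hGv r ((memI r).2 hr) w hw]
    funext j
    by_cases hj : (j : ℕ) < m
    · have h := hτ w hw (Pi.single r 1) j hj
      simp [tproj_apply, Nat.not_le.mpr hj, h]
    · have hjr : j ≠ r := by
        intro h; subst h; exact hj hr
      simp [tproj_apply, Nat.le_of_not_lt hj, Pi.single_apply, hjr]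

/-- A "good local straightening" of the slice relative to a chart-target `U` and a
splitting family `τ`. -/
def GoodLoc (n m : ℕ) (U : Set (Esp n)) (τ : Esp n → (Esp n →ₗ[ℂ] Esp n))
    (φ : OpenPartialHomeomorph (Esp n) (Esp n)) : Prop :=
  φ.source ⊆ U ∧
  AnalyticOnNhd ℂ (↑φ) φ.source ∧
  AnalyticOnNhd ℂ (↑φ.symm) φ.target ∧
  (∀ z ∈ φ.source, ∀ r : Fin n, (r : ℕ) < m → φ z r = z r) ∧
  (∀ z ∈ φ.source ∩ sliceSet n m, φ z = z) ∧
  (∀ z ∈ φ.target ∩ sliceSet n m, ∀ r : Fin n, (r : ℕ) < m →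
    fderiv ℂ (↑φ.symm) z (Pi.single r 1) = τ z (Pi.single r 1)) ∧
  (∀ w ∈ φ.source ∩ sliceSet n m, ∀ s : Fin n, (s : ℕ) < m →
    fderiv ℂ (↑φ) w (τ w (Pi.single s 1)) = Pi.single s 1)

lemma GoodLoc.symm_fix {n m : ℕ} {U τ φ} (h : GoodLoc n m U τ φ) :
    ∀ z ∈ φ.target ∩ sliceSet n m, φ.symm z = z := by
  rintro z ⟨hzt, hzs⟩
  have hy : φ.symm z ∈ φ.source := φ.map_target hzt
  have hys : φ.symm z ∈ sliceSet n m := by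
    intro r hr
    have h2 := h.2.2.2.1 _ hy r hr
    rw [φ.right_inv hzt] at h2
    rw [← h2]; exact hzs r hr
  have h3 := h.2.2.2.2.1 _ ⟨hy, hys⟩
  rw [φ.right_inv hzt] at h3
  exact h3.symm

lemma goodLoc_ofSet {n m : ℕ} (U : Set (Esp n)) (hU : IsOpen U)
    (τ : Esp n → (Esp n →ₗ[ℂ] Esp n)) :
    GoodLoc n m U τ (OpenPartialHomeomorph.ofSet (U ∩ (sliceSet n m)ᶜ)
      (hU.inter (isClosed_sliceSet n m).isOpen_compl)) := by
  constructor
  · intro z hz; exact hz.1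
  refine ⟨?_, ?_, ?_, ?_, ?_, ?_⟩
  · exact fun z _ => analyticAt_id
  · exact fun z _ => analyticAt_id
  · intro z _ r _; rfl
  · rintro z ⟨_, h2⟩
    rfl
  · rintro z ⟨hz1, hz2⟩
    exfalso
    exact hz1.2 hz2
  · rintro z ⟨hz1, hz2⟩
    exfalso
    exact hz1.2 hz2

lemma goodLoc_slice {n m : ℕ} (U : Set (Esp n)) (hU : IsOpen U)
    (τ : Esp n → (Esp n →ₗ[ℂ] Esp n))
    (hτ : ∀ z ∈ U ∩ sliceSet n m, ∀ v : Esp n, ∀ r : Fin n, (r : ℕ) < m → τ z v r = v r)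
    (hF : ∀ r : Fin n, (r : ℕ) < m → ∃ F : Esp n → Esp n,
      AnalyticOnNhd ℂ F U ∧ ∀ z ∈ U ∩ sliceSet n m, F z = τ z (Pi.single r 1))
    {z₀ : Esp n} (hz₀U : z₀ ∈ U) (hz₀s : z₀ ∈ sliceSet n m) :
    ∃ φ : OpenPartialHomeomorph (Esp n) (Esp n), GoodLoc n m U τ φ ∧ z₀ ∈ φ.source := by
  obtain ⟨Φ, D, hΦa, hΦn, hΦfix, hΦd, hΦinv⟩ := phi_exists U hU τ hτ hF
  have hfc : ContDiffAt ℂ ω Φ z₀ := (hΦa z₀ hz₀U).contDiffAt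
  have hf' : HasFDerivAt Φ ((D z₀ : Esp n →L[ℂ] Esp n)) z₀ := hΦd z₀ ⟨hz₀U, hz₀s⟩
  set φ₀ := hfc.toOpenPartialHomeomorph Φ hf' (by simp) with hφ₀
  have hcoe : (⇑φ₀ : Esp n → Esp n) = Φ := rfl
  have hz₀src : z₀ ∈ φ₀.source := hfc.mem_toOpenPartialHomeomorph_source hf' (by simp)
  have hΦz₀ : Φ z₀ = z₀ := hΦfix z₀ hz₀s
  have hlocinv : ContDiffAt ℂ ω (hfc.localInverse hf' (by simp)) (Φ z₀) :=
    hfc.to_localInverse hf' (by simp)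
  have heq : hfc.localInverse hf' (by simp) = (⇑φ₀.symm : Esp n → Esp n) := rfl
  have hAsymm : AnalyticAt ℂ (⇑φ₀.symm : Esp n → Esp n) z₀ := by
    have h := hlocinv.analyticAt
    rwa [heq, hΦz₀] at h
  have hev : ∀ᶠ w in nhds z₀, AnalyticAt ℂ (⇑φ₀.symm : Esp n → Esp n) w :=
    hAsymm.eventually_analyticAt
  obtain ⟨V, hVsub, hVopen, hz₀V⟩ := mem_nhds_iff.mp hev
  set s : Set (Esp n) := (φ₀.source ∩ ⇑φ₀ ⁻¹' V) ∩ U with hsdef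
  have hs : IsOpen s :=
    (φ₀.continuousOn.isOpen_inter_preimage φ₀.open_source hVopen).inter hU
  set φf := φ₀.restr s with hφf
  have hfcoe : (⇑φf : Esp n → Esp n) = Φ := rfl
  have hfsymmcoe : (⇑φf.symm : Esp n → Esp n) = (⇑φ₀.symm : Esp n → Esp n) := rfl
  have hsrc : φf.source = φ₀.source ∩ s := φ₀.restr_source' s hs
  have htar : φf.target = φ₀.target ∩ ⇑φ₀.symm ⁻¹' s := by
    rw [hφf, OpenPartialHomeomorph.restr_target, hs.interior_eq]
  have hsrcU : φf.source ⊆ U := by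
    rw [hsrc]; rintro z ⟨_, _, hzU⟩; exact hzU
  have htarV : ∀ z ∈ φf.target, z ∈ V := by
    rintro z hz
    rw [htar] at hz
    obtain ⟨hzt, hzs⟩ := hz
    have h1 : ⇑φ₀.symm z ∈ φ₀.source ∩ ⇑φ₀ ⁻¹' V := hzs.1
    have h2 := h1.2
    rwa [Set.mem_preimage, φ₀.right_inv hzt] at h2
  have htarfix : ∀ z ∈ φf.target ∩ sliceSet n m, ⇑φ₀.symm z = z ∧ z ∈ U := by
    rintro z ⟨hzt, hzsl⟩
    rw [htar] at hzt
    obtain ⟨hzt0, hzs⟩ := hzt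
    have hyU : ⇑φ₀.symm z ∈ U := hzs.2
    have hysl : ⇑φ₀.symm z ∈ sliceSet n m := by
      intro r hr
      have h := hΦn (⇑φ₀.symm z) r hr
      rw [show Φ (⇑φ₀.symm z) = z from φ₀.right_inv hzt0] at h
      rw [← h]; exact hzsl r hr
    have hfix : Φ (⇑φ₀.symm z) = ⇑φ₀.symm z := hΦfix _ hysl
    have h : ⇑φ₀.symm z = z := by
      rw [← hfix]; exact φ₀.right_inv hzt0
    exact ⟨h, by rwa [h] at hyU⟩
  refine ⟨φf, ⟨hsrcU, ?_, ?_, ?_, ?_, ?_, ?_⟩, ?_⟩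
  · rw [hfcoe]; exact hΦa.mono hsrcU
  · rw [hfsymmcoe]
    intro z hz
    exact hVsub (htarV z hz)
  · intro z _ r hr
    exact hΦn z r hr
  · rintro z ⟨_, hzs⟩
    exact hΦfix z hzs
  · rintro z ⟨hzt, hzsl⟩ r hr
    obtain ⟨hyz, hzU⟩ := htarfix z ⟨hzt, hzsl⟩
    have hzV : z ∈ V := htarV z hzt
    have hzt0 : z ∈ φ₀.target := by rw [htar] at hzt; exact hzt.1
    have hd : HasFDerivAt Φ ((D z : Esp n →L[ℂ] Esp n)) z := hΦd z ⟨hzU, hzsl⟩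
    have hds : DifferentiableAt ℂ (⇑φ₀.symm : Esp n → Esp n) z := (hVsub hzV).differentiableAt
    have hΦdiff : DifferentiableAt ℂ Φ ((⇑φ₀.symm : Esp n → Esp n) z) := by
      rw [hyz]; exact hd.differentiableAt
    have hevmem : (Φ ∘ (⇑φ₀.symm : Esp n → Esp n)) =ᶠ[nhds z] id := by
      filter_upwards [φ₀.open_target.mem_nhds hzt0] with w hw
      exact φ₀.right_inv hw
    have h1 : fderiv ℂ (Φ ∘ (⇑φ₀.symm : Esp n → Esp n)) z = ContinuousLinearMap.id ℂ (Esp n) := by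
      rw [hevmem.fderiv_eq]; exact fderiv_id
    have h2 : fderiv ℂ (Φ ∘ (⇑φ₀.symm : Esp n → Esp n)) z
        = (fderiv ℂ Φ ((⇑φ₀.symm : Esp n → Esp n) z)).comp
            (fderiv ℂ (⇑φ₀.symm : Esp n → Esp n) z) :=
      fderiv_comp z hΦdiff hds
    have h3 : fderiv ℂ Φ ((⇑φ₀.symm : Esp n → Esp n) z) = (D z : Esp n →L[ℂ] Esp n) := by
      rw [hyz]; exact hd.fderiv
    have h4 : ∀ v, (D z) (fderiv ℂ (⇑φ₀.symm : Esp n → Esp n) z v) = v := by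
      intro v
      have h := congrArg (fun (L : Esp n →L[ℂ] Esp n) => L v) (h2.symm.trans h1)
      simp only [ContinuousLinearMap.comp_apply, ContinuousLinearMap.id_apply, h3] at h
      simpa using h
    have h5 : fderiv ℂ (⇑φ₀.symm : Esp n → Esp n) z (Pi.single r 1)
        = (D z).symm (Pi.single r 1) := by
      have h := congrArg (D z).symm (h4 (Pi.single r 1))
      rwa [ContinuousLinearEquiv.symm_apply_apply] at h
    rw [hfsymmcoe, h5, hΦinv z ⟨hzU, hzsl⟩ r hr]
  · rintro w ⟨hws, hwsl⟩ s₁ hs₁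
    have hwU : w ∈ U := hsrcU hws
    have hd : HasFDerivAt Φ ((D w : Esp n →L[ℂ] Esp n)) w := hΦd w ⟨hwU, hwsl⟩
    have h3 : fderiv ℂ (⇑φf : Esp n → Esp n) w = (D w : Esp n →L[ℂ] Esp n) := by
      rw [hfcoe]; exact hd.fderiv
    rw [h3, ← hΦinv w ⟨hwU, hwsl⟩ s₁ hs₁]
    simp
  · rw [hsrc]
    refine ⟨hz₀src, ⟨⟨hz₀src, ?_⟩, hz₀U⟩⟩
    rw [Set.mem_preimage]
    show Φ z₀ ∈ V
    rw [hΦz₀]; exact hz₀V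

end Construction

section Compat

variable {n m : ℕ} {M : Type*} [TopologicalSpace M]

lemma trans_symm_apply' (e : OpenPartialHomeomorph M (Esp n))
    (φ : OpenPartialHomeomorph (Esp n) (Esp n)) (z : Esp n) :
    (e.trans φ).symm z = e.symm (φ.symm z) := by
  have h := congrFun (OpenPartialHomeomorph.coe_trans_symm e φ) z
  exact h

lemma trans_compat_left (e : OpenPartialHomeomorph M (Esp n))
    (φ : OpenPartialHomeomorph (Esp n) (Esp n))
    (hφsrc : φ.source ⊆ e.target) (hφt : AnalyticOnNhd ℂ (⇑φ.symm) φ.target)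
    (c : OpenPartialHomeomorph M (Esp n)) (hec : IsHoloCompat e c) :
    IsHoloCompat (e.trans φ) c := by
  rintro z ⟨hzt, hzs⟩
  rw [OpenPartialHomeomorph.trans_target] at hzt
  obtain ⟨hzφ, _⟩ := hzt
  have hy : φ.symm z ∈ φ.source := φ.map_target hzφ
  have hyU : φ.symm z ∈ e.target := hφsrc hy
  have hcs : e.symm (φ.symm z) ∈ c.source := by
    have h : (e.trans φ).symm z ∈ c.source := hzs
    rwa [trans_symm_apply'] at h
  have h1 : AnalyticAt ℂ (↑c ∘ ⇑e.symm) (φ.symm z) := hec _ ⟨hyU, hcs⟩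
  have h2 : AnalyticAt ℂ (⇑φ.symm) z := hφt z hzφ
  have h3 := h1.comp h2
  have hfun : (↑c ∘ ⇑(e.trans φ).symm) = ((↑c ∘ ⇑e.symm) ∘ ⇑φ.symm) := by
    rw [OpenPartialHomeomorph.coe_trans_symm]
    rfl
  rw [hfun]
  exact h3

lemma trans_compat_right (e : OpenPartialHomeomorph M (Esp n))
    (φ : OpenPartialHomeomorph (Esp n) (Esp n))
    (hφs : AnalyticOnNhd ℂ (⇑φ) φ.source)
    (c : OpenPartialHomeomorph M (Esp n)) (hce : IsHoloCompat c e) :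
    IsHoloCompat c (e.trans φ) := by
  rintro z ⟨hzt, hzs⟩
  have hmem : c.symm z ∈ (e.trans φ).source := hzs
  rw [OpenPartialHomeomorph.trans_source] at hmem
  obtain ⟨h1, h2⟩ := hmem
  have ha1 : AnalyticAt ℂ (↑e ∘ ⇑c.symm) z := hce _ ⟨hzt, h1⟩
  have ha2 : AnalyticAt ℂ (⇑φ) ((↑e ∘ ⇑c.symm) z) := hφs _ h2
  have h3 := ha2.comp ha1
  have hfun : (↑(e.trans φ) ∘ ⇑c.symm) = (⇑φ ∘ (↑e ∘ ⇑c.symm)) := by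
    rw [OpenPartialHomeomorph.coe_trans]
    rfl
  rw [hfun]
  exact h3

lemma trans_compat_pair (e e' : OpenPartialHomeomorph M (Esp n))
    (φ φ' : OpenPartialHomeomorph (Esp n) (Esp n))
    (hφsrc : φ.source ⊆ e.target)
    (hφt : AnalyticOnNhd ℂ (⇑φ.symm) φ.target)
    (hφ's : AnalyticOnNhd ℂ (⇑φ') φ'.source)
    (hee' : IsHoloCompat e e') :
    IsHoloCompat (e.trans φ) (e'.trans φ') := by
  rintro z ⟨hzt, hzs⟩
  rw [OpenPartialHomeomorph.trans_target] at hzt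
  obtain ⟨hzφ, _⟩ := hzt
  have hy : φ.symm z ∈ φ.source := φ.map_target hzφ
  have hyU : φ.symm z ∈ e.target := hφsrc hy
  have hmem : (e.trans φ).symm z ∈ (e'.trans φ').source := hzs
  rw [trans_symm_apply', OpenPartialHomeomorph.trans_source] at hmem
  obtain ⟨h1, h2⟩ := hmem
  have a1 : AnalyticAt ℂ (⇑φ.symm) z := hφt z hzφ
  have a2 : AnalyticAt ℂ (↑e' ∘ ⇑e.symm) (φ.symm z) := hee' _ ⟨hyU, h1⟩
  have a3 : AnalyticAt ℂ (⇑φ') ((↑e' ∘ ⇑e.symm) (φ.symm z)) := hφ's _ h2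
  have h3 := (a3.comp a2).comp a1
  have hfun : (↑(e'.trans φ') ∘ ⇑(e.trans φ).symm)
      = ((⇑φ' ∘ (↑e' ∘ ⇑e.symm)) ∘ ⇑φ.symm) := by
    rw [OpenPartialHomeomorph.coe_trans, OpenPartialHomeomorph.coe_trans_symm]
    rfl
  rw [hfun]
  exact h3

end Compat

/-!
STATEMENT 6.  `S` is a complex submanifold of codimension `m` of the `n`-dimensional
complex manifold `M` (`hsub`: `S` admits an adapted atlas).  Conclusion
(Proposition 2.1): `S` splits into `M` — the exact sequence
`O → TS → TM|_S → N_S → O` splits — if and only if there is an atlas `{(Û_α, ẑ_α)}`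
adapted to `S` such that `∂ẑ^p_β/∂ẑ^r_α` vanishes on `S` for all `r ≤ m < p` and all
pairs of charts.
-/
theorem statement_6 {n m : ℕ} (hm : 0 < m) (hmn : m < n)
    {M : Type*} [TopologicalSpace M] [ChartedSpace (Esp n) M] (S : Set M)
    (hSne : S.Nonempty)
    (hsub : ∃ A : Set (OpenPartialHomeomorph M (Esp n)), IsAdaptedAtlas n m S A) :
    SplitsInto n m S ↔
      ∃ A : Set (OpenPartialHomeomorph M (Esp n)), IsAdaptedAtlas n m S A ∧
        ∀ e ∈ A, ∀ e' ∈ A, ∀ z ∈ e.target ∩ sliceSet n m, e.symm z ∈ e'.source →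
          ∀ r p : Fin n, (r : ℕ) < m → m ≤ (p : ℕ) →
            (fderiv ℂ (↑e' ∘ e.symm) z (Pi.single r 1)) p = 0 := by
  constructor
  · rintro ⟨A, hA, σ, hσ1, hσ2, hσ3, hσ4⟩
    classical
    set A' : Set (OpenPartialHomeomorph M (Esp n)) :=
      {c | ∃ e, e ∈ A ∧ ∃ φ : OpenPartialHomeomorph (Esp n) (Esp n),
        GoodLoc n m e.target (σ e) φ ∧ c = e.trans φ} with hA'
    have hτ : ∀ e ∈ A, ∀ z ∈ e.target ∩ sliceSet n m, ∀ v : Esp n, ∀ r : Fin n,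
        (r : ℕ) < m → σ e z v r = v r := fun e he z hz v r hr => hσ2 e he z hz v r hr
    have hFex : ∀ e ∈ A, ∀ r : Fin n, (r : ℕ) < m → ∃ F : Esp n → Esp n,
        AnalyticOnNhd ℂ F e.target ∧ ∀ z ∈ e.target ∩ sliceSet n m,
          F z = σ e z (Pi.single r 1) := fun e he r _ => hσ3 e he (Pi.single r 1)
    have hadapted : ∀ c ∈ A', IsAdaptedChart n m S c := by
      rintro c ⟨e, heA, φ, hg, rfl⟩
      obtain ⟨hsrcU, hφs, hφt, hnorm, hfix, _, _⟩ := hg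
      have he := hA.1 e heA
      constructor
      · intro ch hch
        exact ⟨trans_compat_left e φ hsrcU hφt ch (he.1 ch hch).1,
               trans_compat_right e φ hφs ch (he.1 ch hch).2⟩
      · ext x
        simp only [Set.mem_inter_iff, OpenPartialHomeomorph.trans_source, Set.mem_preimage]
        constructor
        · rintro ⟨⟨hx1, hx2⟩, hxS⟩
          refine ⟨⟨hx1, hx2⟩, ?_⟩
          have hx3 : e x ∈ sliceSet n m := ((Set.ext_iff.mp he.2 x).mp ⟨hx1, hxS⟩).2
          show (e.trans φ) x ∈ sliceSet n m
          have hco : (e.trans φ) x = φ (e x) := rfl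
          rw [hco]
          intro r hr
          rw [hnorm (e x) hx2 r hr]
          exact hx3 r hr
        · rintro ⟨⟨hx1, hx2⟩, hsl⟩
          refine ⟨⟨hx1, hx2⟩, ?_⟩
          have hco : (e.trans φ) x = φ (e x) := rfl
          have hsl' : φ (e x) ∈ sliceSet n m := by rw [← hco]; exact hsl
          have hx3 : e x ∈ sliceSet n m := by
            intro r hr
            rw [← hnorm (e x) hx2 r hr]
            exact hsl' r hr
          exact ((Set.ext_iff.mp he.2 x).mpr ⟨hx1, hx3⟩).2
    have hcover : ∀ x : M, ∃ c ∈ A', x ∈ c.source := by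
      intro x
      obtain ⟨e, heA, hx⟩ := hA.2.1 x
      have he := hA.1 e heA
      by_cases hxS : x ∈ S
      · have hxt : e x ∈ e.target := e.map_source hx
        have hxsl : e x ∈ sliceSet n m := ((Set.ext_iff.mp he.2 x).mp ⟨hx, hxS⟩).2
        obtain ⟨φ, hg, hmem⟩ := goodLoc_slice e.target e.open_target (σ e)
          (hτ e heA) (hFex e heA) hxt hxsl
        refine ⟨e.trans φ, ⟨e, heA, φ, hg, rfl⟩, ?_⟩
        rw [OpenPartialHomeomorph.trans_source]
        exact ⟨hx, hmem⟩
      · refine ⟨e.trans (OpenPartialHomeomorph.ofSet (e.target ∩ (sliceSet n m)ᶜ)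
          (e.open_target.inter (isClosed_sliceSet n m).isOpen_compl)),
          ⟨e, heA, _, goodLoc_ofSet e.target e.open_target (σ e), rfl⟩, ?_⟩
        rw [OpenPartialHomeomorph.trans_source]
        refine ⟨hx, ?_⟩
        show e x ∈ (OpenPartialHomeomorph.ofSet (e.target ∩ (sliceSet n m)ᶜ)
          (e.open_target.inter (isClosed_sliceSet n m).isOpen_compl)).source
        refine ⟨e.map_source hx, ?_⟩
        intro hsl
        exact hxS (((Set.ext_iff.mp he.2 x).mpr ⟨hx, hsl⟩).2)
    have hcompat : ∀ c ∈ A', ∀ c' ∈ A', IsHoloCompat c c' := by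
      rintro c ⟨e, heA, φ, hg, rfl⟩ c' ⟨e', he'A, φ', hg', rfl⟩
      exact trans_compat_pair e e' φ φ' hg.1 hg.2.2.1 hg'.2.1 (hA.2.2 e heA e' he'A)
    refine ⟨A', ⟨hadapted, hcover, hcompat⟩, ?_⟩
    rintro c ⟨e, heA, φ, hg, rfl⟩ c' ⟨e', he'A, φ', hg', rfl⟩ z hz hsym r p hr hp
    obtain ⟨hzt, hzsl⟩ := hz
    have hzφt : z ∈ φ.target := by
      rw [OpenPartialHomeomorph.trans_target] at hzt; exact hzt.1
    have hfix : φ.symm z = z := hg.symm_fix z ⟨hzφt, hzsl⟩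
    have hzsrcφ : z ∈ φ.source := by rw [← hfix]; exact φ.map_target hzφt
    have hzU : z ∈ e.target := hg.1 hzsrcφ
    have hsym2 : e.symm z ∈ (e'.trans φ').source := by
      have h := hsym
      rwa [trans_symm_apply', hfix] at h
    rw [OpenPartialHomeomorph.trans_source] at hsym2
    obtain ⟨hxe', hw'src⟩ := hsym2
    have hw'src' : e' (e.symm z) ∈ φ'.source := hw'src
    have hxs : e.symm z ∈ e.source := e.map_target hzU
    have hxS : e.symm z ∈ S := by
      have h : e.symm z ∈ e.source ∩ ↑e ⁻¹' sliceSet n m :=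
        ⟨hxs, by rw [Set.mem_preimage, e.right_inv hzU]; exact hzsl⟩
      rw [← (hA.1 e heA).2] at h
      exact h.2
    have hw'sl : e' (e.symm z) ∈ sliceSet n m := by
      have h : e.symm z ∈ e'.source ∩ S := ⟨hxe', hxS⟩
      rw [(hA.1 e' he'A).2] at h
      exact h.2
    have hgan : AnalyticAt ℂ (↑e' ∘ ⇑e.symm) z := hA.2.2 e heA e' he'A z ⟨hzU, hxe'⟩
    have hfun : (↑(e'.trans φ') ∘ ⇑(e.trans φ).symm)
        = ((⇑φ' ∘ (↑e' ∘ ⇑e.symm)) ∘ ⇑φ.symm) := by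
      rw [OpenPartialHomeomorph.coe_trans, OpenPartialHomeomorph.coe_trans_symm]
      rfl
    rw [hfun]
    have hdφs : DifferentiableAt ℂ (⇑φ.symm) z := (hg.2.2.1 z hzφt).differentiableAt
    have hdφ'w : DifferentiableAt ℂ (⇑φ') ((↑e' ∘ ⇑e.symm) z) :=
      (hg'.2.1 _ hw'src').differentiableAt
    have hH1 : DifferentiableAt ℂ (⇑φ' ∘ (↑e' ∘ ⇑e.symm)) (φ.symm z) := by
      rw [hfix]; exact hdφ'w.comp z hgan.differentiableAt
    have hc1 : fderiv ℂ ((⇑φ' ∘ (↑e' ∘ ⇑e.symm)) ∘ ⇑φ.symm) z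
        = (fderiv ℂ (⇑φ' ∘ (↑e' ∘ ⇑e.symm)) (φ.symm z)).comp (fderiv ℂ (⇑φ.symm) z) :=
      fderiv_comp z hH1 hdφs
    have hc2 : fderiv ℂ (⇑φ' ∘ (↑e' ∘ ⇑e.symm)) (φ.symm z)
        = (fderiv ℂ (⇑φ') ((↑e' ∘ ⇑e.symm) (φ.symm z))).comp
            (fderiv ℂ (↑e' ∘ ⇑e.symm) (φ.symm z)) := by
      rw [hfix]
      exact fderiv_comp z hdφ'w hgan.differentiableAt
    rw [hc1, hc2]
    simp only [ContinuousLinearMap.comp_apply]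
    have hstep1 : fderiv ℂ (⇑φ.symm) z (Pi.single r 1) = σ e z (Pi.single r 1) :=
      hg.2.2.2.2.2.1 z ⟨hzφt, hzsl⟩ r hr
    rw [hstep1, hfix]
    have hstep2 : fderiv ℂ (↑e' ∘ ⇑e.symm) z (σ e z (Pi.single r 1))
        = σ e' (e' (e.symm z)) (fderiv ℂ (↑e' ∘ ⇑e.symm) z (Pi.single r 1)) :=
      (hσ4 e heA e' he'A z ⟨hzU, hzsl⟩ hxe' (Pi.single r 1)).symm
    rw [hstep2]
    have hagree : ∀ j : Fin n, (j : ℕ) < m →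
        fderiv ℂ (↑e' ∘ ⇑e.symm) z (Pi.single r 1) j
          = (∑ s ∈ Finset.univ.filter (fun s : Fin n => (s : ℕ) < m),
              fderiv ℂ (↑e' ∘ ⇑e.symm) z (Pi.single r 1) s • (Pi.single s 1 : Esp n)) j := by
      intro j hj
      rw [sum_single_apply]; simp [hj]
    have hdec : σ e' (e' (e.symm z)) (fderiv ℂ (↑e' ∘ ⇑e.symm) z (Pi.single r 1))
        = ∑ s ∈ Finset.univ.filter (fun s : Fin n => (s : ℕ) < m),
            fderiv ℂ (↑e' ∘ ⇑e.symm) z (Pi.single r 1) s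
              • σ e' (e' (e.symm z)) (Pi.single s 1) := by
      rw [hσ1 e' he'A (e' (e.symm z)) _ _ hagree, map_sum]
      exact Finset.sum_congr rfl fun s _ => by rw [map_smul]
    rw [hdec, map_sum, Finset.sum_apply]
    refine Finset.sum_eq_zero fun s hs => ?_
    have hsm : (s : ℕ) < m := by simpa using hs
    rw [map_smul]
    have hstep3 : fderiv ℂ (⇑φ') ((↑e' ∘ ⇑e.symm) z) (σ e' (e' (e.symm z)) (Pi.single s 1))
        = Pi.single s 1 :=
      hg'.2.2.2.2.2.2 (e' (e.symm z)) ⟨hw'src', hw'sl⟩ s hsm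
    simp only [Pi.smul_apply]
    rw [hstep3]
    have hps : p ≠ s := by
      intro h; subst h
      exact absurd hp (Nat.not_le.mpr hsm)
    simp [Pi.single_apply, hps]
  · rintro ⟨A, hA, hvan⟩
    exact reverse_split hA hvan
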